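/- For every n ≥ 2 and every λ ∈ ℂ with |λ| < √n, λ is an eigenvalue of W_n*. An explicit eigenvector f is given by f̂(0) = 1 and f̂(k) = (λ/n)^ℓ · (λ−1)/(n−1) for n^ℓ ≤ k ≤ n^{ℓ+1}−1, ℓ ≥ 0; this f lies in ℓ² and satisfies W_n* f = λ f. -/

import Mathlib

open scoped InnerProductSpace
open Filter ContinuousLinearMap
open scoped ENNReal

noncomputable section

/-- The Hardy space `H²` identified with `ℓ²(ℕ)` via Maclaurin coefficients. -/
abbrev H2 := lp (fun _ : ℕ => ℂ) 2

/-- `W` is the weighted composition operator `W_n f(z) = (1+z+⋯+z^{n-1}) f(z^n)`,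
expressed in Maclaurin coefficients: `(W_n f)^(nk+j) = f^(k)` for `0 ≤ j ≤ n-1`. -/
def IsWn (n : ℕ) (W : H2 →L[ℂ] H2) : Prop :=
  ∀ (f : H2) (k j : ℕ), j < n → (W f) (n * k + j) = f k

namespace EigAux

/-- The explicit eigenvector coefficients. -/
def g (n : ℕ) (lam : ℂ) : ℕ → ℂ :=
  fun k => if k = 0 then 1 else (lam / (n : ℂ)) ^ (Nat.log n k) * ((lam - 1) / ((n : ℂ) - 1))

lemma log_mul_add {n : ℕ} (hn : 2 ≤ n) {k : ℕ} (hk : 1 ≤ k) {j : ℕ} (hj : j < n) :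
    Nat.log n (n * k + j) = Nat.log n k + 1 := by
  apply Nat.log_eq_of_pow_le_of_lt_pow
  · calc n ^ (Nat.log n k + 1) = n * n ^ Nat.log n k := by ring
      _ ≤ n * k := Nat.mul_le_mul_left n (Nat.pow_log_le_self n (by omega))
      _ ≤ n * k + j := Nat.le_add_right _ _
  · have h1 : k < n ^ (Nat.log n k + 1) := Nat.lt_pow_succ_log_self (by omega) k
    calc n * k + j < n * (k + 1) := by rw [Nat.mul_succ]; omega
      _ ≤ n * n ^ (Nat.log n k + 1) := Nat.mul_le_mul_left n h1
      _ = n ^ (Nat.log n k + 1 + 1) := by ring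

lemma block_sum {n : ℕ} (hn : 2 ≤ n) (lam : ℂ) (k : ℕ) :
    ∑ j ∈ Finset.range n, g n lam (n * k + j) = lam * g n lam k := by
  have hn0 : (n : ℂ) ≠ 0 := Nat.cast_ne_zero.mpr (by omega)
  have hn1 : (n : ℂ) - 1 ≠ 0 := by
    intro h
    have h' : (n : ℂ) = 1 := by linear_combination h
    have : n = 1 := by exact_mod_cast h'
    omega
  rcases Nat.eq_zero_or_pos k with rfl | hk
  · have hcongr : ∀ j ∈ Finset.range n, g n lam (n * 0 + j)
        = ((lam - 1) / ((n : ℂ) - 1)) + (if j = 0 then 1 - (lam - 1) / ((n : ℂ) - 1) else 0) := by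
      intro j hj
      rw [Finset.mem_range] at hj
      have hlog : Nat.log n j = 0 := Nat.log_eq_zero_iff.mpr (Or.inl hj)
      rcases eq_or_ne j 0 with rfl | hj0
      · simp [g]
      · simp [g, hj0, hlog]
    rw [Finset.sum_congr rfl hcongr, Finset.sum_add_distrib, Finset.sum_const,
      Finset.sum_ite_eq' (Finset.range n) 0, Finset.card_range,
      if_pos (Finset.mem_range.mpr (by omega : 0 < n))]
    simp only [g, if_pos rfl, nsmul_eq_mul, mul_one, eq_self_iff_true, if_true]
    field_simp
    ring
  · have hcongr : ∀ j ∈ Finset.range n, g n lam (n * k + j)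
        = (lam / (n : ℂ)) * ((lam / (n : ℂ)) ^ (Nat.log n k) * ((lam - 1) / ((n : ℂ) - 1))) := by
      intro j hj
      rw [Finset.mem_range] at hj
      have hkn : 1 ≤ n * k := Nat.one_le_iff_ne_zero.mpr (Nat.mul_ne_zero (by omega) (by omega))
      have hne : n * k + j ≠ 0 := by omega
      simp only [g, if_neg hne, log_mul_add hn hk hj, pow_succ]
      ring
    rw [Finset.sum_congr rfl hcongr, Finset.sum_const, Finset.card_range, nsmul_eq_mul]
    simp only [g, if_neg (by omega : k ≠ 0)]
    field_simp

lemma summable_pow_log {n : ℕ} (hn : 2 ≤ n) {r : ℝ} (hr : 0 ≤ r) (hnr : (n : ℝ) * r < 1) :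
    Summable fun k : ℕ => r ^ Nat.log n k := by
  have hnr0 : 0 ≤ (n : ℝ) * r := mul_nonneg (by positivity) hr
  have hgeo : Summable fun ℓ : ℕ => (n : ℝ) * ((n : ℝ) * r) ^ ℓ :=
    (summable_geometric_of_lt_one hnr0 hnr).mul_left _
  apply summable_of_sum_range_le (c := ∑' ℓ : ℕ, (n : ℝ) * ((n : ℝ) * r) ^ ℓ)
    (fun k => pow_nonneg hr _)
  intro m
  have hmap : ∀ k ∈ Finset.range m, Nat.log n k ∈ Finset.range m := by
    intro k hk
    rw [Finset.mem_range] at *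
    exact lt_of_le_of_lt (Nat.log_le_self _ _) hk
  rw [← Finset.sum_fiberwise_of_maps_to' hmap (fun ℓ => r ^ ℓ)]
  have hinner : ∀ j ∈ Finset.range m,
      (∑ _i ∈ (Finset.range m).filter (fun i => Nat.log n i = j), r ^ j)
        ≤ (n : ℝ) * ((n : ℝ) * r) ^ j := by
    intro j _
    rw [Finset.sum_const, nsmul_eq_mul]
    have hsub : (Finset.range m).filter (fun i => Nat.log n i = j)
        ⊆ Finset.range (n ^ (j + 1)) := by
      intro i hi
      rw [Finset.mem_filter] at hi
      rw [Finset.mem_range, ← hi.2]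
      exact Nat.lt_pow_succ_log_self (by omega) i
    have hcard : (((Finset.range m).filter (fun i => Nat.log n i = j)).card : ℝ)
        ≤ ((n : ℝ)) ^ (j + 1) := by
      have := Finset.card_le_card hsub
      rw [Finset.card_range] at this
      exact_mod_cast this
    calc (((Finset.range m).filter (fun i => Nat.log n i = j)).card : ℝ) * r ^ j
        ≤ (n : ℝ) ^ (j + 1) * r ^ j :=
          mul_le_mul_of_nonneg_right hcard (pow_nonneg hr j)
      _ = (n : ℝ) * ((n : ℝ) * r) ^ j := by rw [mul_pow]; ring
  calc (∑ j ∈ Finset.range m,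
        ∑ _i ∈ (Finset.range m).filter (fun i => Nat.log n i = j), r ^ j)
      ≤ ∑ j ∈ Finset.range m, (n : ℝ) * ((n : ℝ) * r) ^ j := Finset.sum_le_sum hinner
    _ ≤ ∑' ℓ : ℕ, (n : ℝ) * ((n : ℝ) * r) ^ ℓ :=
        Summable.sum_le_tsum _ (fun i _ => mul_nonneg (by positivity) (pow_nonneg hnr0 i)) hgeo

lemma memg2 {n : ℕ} (hn : 2 ≤ n) {lam : ℂ} (hlam : ‖lam‖ < Real.sqrt n) :
    Memℓp (g n lam) 2 := by
  have hnpos : (0 : ℝ) < n := by positivity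
  set r : ℝ := (‖lam‖ / n) ^ 2 with hrdef
  have hr0 : 0 ≤ r := sq_nonneg _
  have habs : ‖lam‖ = ‖lam‖ := rfl
  have hml : ‖lam‖ ^ 2 < n := by
    rw [habs]
    have h0 : 0 ≤ ‖lam‖ := norm_nonneg _
    have h1 : 0 ≤ Real.sqrt n := Real.sqrt_nonneg _
    nlinarith [Real.sq_sqrt (le_of_lt hnpos)]
  have hnr : (n : ℝ) * r < 1 := by
    have hcalc : (n : ℝ) * r = ‖lam‖ ^ 2 / n := by
      rw [hrdef, div_pow]
      field_simp
    rw [hcalc, div_lt_one hnpos]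
    exact hml
  set c : ℂ := (lam - 1) / ((n : ℂ) - 1) with hcdef
  set C : ℝ := max 1 (‖c‖ ^ 2) with hCdef
  have hb : ∀ k, ‖g n lam k‖ ^ 2 ≤ C * r ^ Nat.log n k := by
    intro k
    rcases eq_or_ne k 0 with rfl | hk
    · have h0 : ‖g n lam 0‖ ^ 2 = 1 := by simp [g]
      rw [h0, Nat.log_zero_right, pow_zero, mul_one, hCdef]
      exact le_max_left _ _
    · simp only [g, if_neg hk, ← hcdef, norm_mul, mul_pow, norm_pow]
      have hnorm : ‖lam / (n : ℂ)‖ = ‖lam‖ / n := by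
        rw [norm_div]
        norm_num
      rw [hnorm]
      calc ((‖lam‖ / (n : ℝ)) ^ Nat.log n k) ^ 2 * ‖c‖ ^ 2
          = r ^ Nat.log n k * ‖c‖ ^ 2 := by
            rw [hrdef, ← pow_mul, ← pow_mul, Nat.mul_comm]
        _ ≤ r ^ Nat.log n k * C :=
            mul_le_mul_of_nonneg_left (le_max_right _ _) (pow_nonneg hr0 _)
        _ = C * r ^ Nat.log n k := mul_comm _ _
  have S : Summable fun k => ‖g n lam k‖ ^ 2 :=
    Summable.of_nonneg_of_le (fun k => pow_nonneg (norm_nonneg _) 2) hb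
      ((summable_pow_log hn hr0 hnr).mul_left C)
  apply memℓp_gen
  have heq : ∀ k, ‖g n lam k‖ ^ 2 = ‖g n lam k‖ ^ (2 : ℝ≥0∞).toReal := by
    intro k
    rw [ENNReal.toReal_ofNat, show ((2 : ℝ)) = ((2 : ℕ) : ℝ) by norm_num, Real.rpow_natCast]
  exact S.congr heq

lemma div_eq_iff_aux {n k : ℕ} (hn : 0 < n) (i : ℕ) :
    i / n = k ↔ n * k ≤ i ∧ i < n * k + n := by
  constructor
  · intro h
    have h1 := Nat.div_add_mod i n
    have h2 := Nat.mod_lt i hn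
    rw [h] at h1
    omega
  · rintro ⟨h1, h2⟩
    apply Nat.div_eq_of_lt_le (by rw [mul_comm]; exact h1)
    calc i < n * k + n := h2
      _ = (k + 1) * n := by ring

end EigAux

/-- For `n ≥ 2` and `|λ| < √n`, `λ` is an eigenvalue of `W_n*`, with explicit
eigenvector `f^(0) = 1`, `f^(k) = (λ/n)^ℓ (λ-1)/(n-1)` for `n^ℓ ≤ k ≤ n^{ℓ+1}-1`. -/
theorem eigenvalue_adjoint (n : ℕ) (hn : 2 ≤ n) (lam : ℂ)
    (hlam : ‖lam‖ < Real.sqrt n) (W : H2 →L[ℂ] H2) (hW : IsWn n W) :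
    ∃ f : H2, f ≠ 0 ∧ f 0 = 1 ∧
      (∀ k : ℕ, 1 ≤ k →
        f k = (lam / (n : ℂ)) ^ (Nat.log n k) * ((lam - 1) / ((n : ℂ) - 1))) ∧
      ContinuousLinearMap.adjoint W f = lam • f := by
  have npos : 0 < n := by omega
  set f : H2 := ⟨EigAux.g n lam, EigAux.memg2 hn hlam⟩ with hfdef
  have hfk : ∀ k, f k = EigAux.g n lam k := fun k => rfl
  have hf0 : f 0 = 1 := by rw [hfk]; simp [EigAux.g]
  refine ⟨f, ?_, hf0, ?_, ?_⟩
  · intro h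
    rw [h] at hf0
    simp at hf0
  · intro k hk
    rw [hfk]
    unfold EigAux.g
    rw [if_neg (by omega : ¬ k = 0)]
  · have key : ∀ k, (ContinuousLinearMap.adjoint W f) k = lam * f k := by
      intro k
      have h1 : ⟪lp.single 2 k (1 : ℂ), ContinuousLinearMap.adjoint W f⟫_ℂ
          = (ContinuousLinearMap.adjoint W f) k := by
        rw [lp.inner_single_left]
        simp [RCLike.inner_apply]
      rw [← h1, ContinuousLinearMap.adjoint_inner_right, lp.inner_eq_tsum]
      have hWe : ∀ i : ℕ, (W (lp.single 2 k (1 : ℂ))) i = if i / n = k then 1 else 0 := by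
        intro i
        have h := hW (lp.single 2 k (1 : ℂ)) (i / n) (i % n) (Nat.mod_lt i npos)
        rw [Nat.div_add_mod i n] at h
        rw [h]
        rcases eq_or_ne (i / n) k with hik | hik
        · rw [hik, lp.single_apply_self, if_pos rfl]
        · rw [lp.single_apply_ne 2 k _ hik, if_neg hik]
      have hterm : ∀ i : ℕ,
          ⟪(W (lp.single 2 k (1 : ℂ))) i, f i⟫_ℂ = if i / n = k then f i else 0 := by
        intro i
        rw [RCLike.inner_apply, hWe i]
        split_ifs <;> simp
      rw [tsum_congr hterm,
        tsum_eq_sum (s := Finset.Ico (n * k) (n * k + n)) ?_]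
      · have hin : ∀ i ∈ Finset.Ico (n * k) (n * k + n),
            (if i / n = k then f i else 0) = f i := by
          intro i hi
          rw [Finset.mem_Ico] at hi
          rw [if_pos ((EigAux.div_eq_iff_aux npos i).mpr hi)]
        rw [Finset.sum_congr rfl hin, Finset.sum_Ico_eq_sum_range]
        have hlen : n * k + n - n * k = n := by omega
        rw [hlen]
        have := EigAux.block_sum hn lam k
        simp only [hfk]
        exact this
      · intro i hi
        rw [Finset.mem_Ico] at hi
        rw [if_neg]
        intro h
        exact hi ((EigAux.div_eq_iff_aux npos i).mp h)
    refine lp.ext (funext fun k => ?_)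
    rw [key k]
    simp only [lp.coeFn_smul, Pi.smul_apply, smul_eq_mul]
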